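/- arXiv:2604.23876 — 2 statements merged into one kernel-verified Lean document; each statement's English description precedes it below -/
import Mathlib

section
/- Suppose F : ℝⁿ → ℝⁿ satisfies ⟪x, F(x)⟫ ≤ -α‖x‖² + β for all x, with α > 0, β ≥ 0, and x : ℝ → ℝⁿ is a differentiable solution of x'(t) = F(x(t)). If ‖x(0)‖² ≤ β/α + 1, then ‖x(t)‖² ≤ β/α + 1 for all t ≥ 0 (the ball {x : ‖x‖² ≤ β/α + 1} is positively invariant). -/
open Real Set

theorem ball_positively_invariant
    (n : ℕ) (F : EuclideanSpace ℝ (Fin n) → EuclideanSpace ℝ (Fin n))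
    (α β : ℝ) (hα : 0 < α) (hβ : 0 ≤ β)
    (hdiss : ∀ x : EuclideanSpace ℝ (Fin n),
      inner ℝ x (F x) ≤ -α * ‖x‖ ^ 2 + β)
    (x : ℝ → EuclideanSpace ℝ (Fin n))
    (hx : ∀ t : ℝ, HasDerivAt x (F (x t)) t)
    (h0 : ‖x 0‖ ^ 2 ≤ β / α + 1) :
    ∀ t ≥ (0:ℝ), ‖x t‖ ^ 2 ≤ β / α + 1 := by
  intro t ht
  set f : ℝ → ℝ := fun s => ‖x s‖ ^ 2 with hf
  set f' : ℝ → ℝ := fun s => 2 * inner ℝ (x s) (F (x s)) with hf'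
  have hderiv : ∀ s : ℝ, HasDerivAt f (f' s) s := by
    intro s
    have h1 := (hx s).inner ℝ (hx s)
    simp only [hf, hf', ← real_inner_self_eq_norm_sq]
    refine h1.congr_deriv ?_
    rw [real_inner_comm (F (x s)) (x s)]; ring
  have key : ∀ s ∈ Icc (0:ℝ) t, f s ≤ gronwallBound (β/α+1) (-2*α) (2*β) (s - 0) := by
    apply le_gronwallBound_of_liminf_deriv_right_le
    · exact fun s _ => (hderiv s).continuousAt.continuousWithinAt
    · exact fun s _ r hr => ((hderiv s).hasDerivWithinAt).liminf_right_slope_le hr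
    · simpa [hf] using h0
    · intro s _
      have := hdiss (x s)
      simp only [hf, hf']
      nlinarith
  have hb := key t ⟨le_refl 0 |>.trans ht, le_refl t⟩
  rw [sub_zero] at hb
  have hK : (-2*α : ℝ) ≠ 0 := by nlinarith
  rw [gronwallBound_of_K_ne_0 hK] at hb
  simp only at hb
  have he : exp (-2*α*t) ≤ 1 := exp_le_one_iff.mpr (by nlinarith)
  have he' : 0 < exp (-2*α*t) := exp_pos _
  have : (β/α+1) * exp (-2*α*t) + 2*β/(-2*α) * (exp (-2*α*t) - 1)
      = β/α + exp (-2*α*t) := by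
    field_simp
    ring
  rw [this] at hb
  simpa [hf] using hb.trans (by linarith)
end

section
/- Under the dissipativity hypothesis x·F(x) ≤ -α‖x‖² + β (α > 0, β ≥ 0), if a solution x(t) of x' = F(x) has V(0) = ‖x(0)‖² > ρ + ε where ρ = β/α and ε > 0, then V(t) ≤ ρ + ε for all t ≥ T, where T = (1/(2α))·ln((V(0) - ρ)/ε). -/
theorem absorbing_ball_entry_time
    (n : ℕ) (F : EuclideanSpace ℝ (Fin n) → EuclideanSpace ℝ (Fin n))
    (α β : ℝ) (hα : 0 < α) (hβ : 0 ≤ β)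
    (hdiss : ∀ x : EuclideanSpace ℝ (Fin n),
      inner ℝ x (F x) ≤ -α * ‖x‖ ^ 2 + β)
    (x : ℝ → EuclideanSpace ℝ (Fin n))
    (hx : ∀ t : ℝ, HasDerivAt x (F (x t)) t)
    (ε : ℝ) (hε : 0 < ε)
    (h0 : ‖x 0‖ ^ 2 > β / α + ε) :
    ∀ t ≥ (1 / (2 * α)) * Real.log ((‖x 0‖ ^ 2 - β / α) / ε),
      ‖x t‖ ^ 2 ≤ β / α + ε := by
  intro t ht
  set ρ := β / α with hρ
  set V : ℝ → ℝ := fun s => ‖x s‖ ^ 2 with hV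
  set V' : ℝ → ℝ := fun s => 2 * inner ℝ (x s) (F (x s)) with hV'
  have hVderiv : ∀ s : ℝ, HasDerivAt V (V' s) s := by
    intro s
    have h1 : HasDerivAt (fun u => (inner ℝ (x u) (x u) : ℝ))
        (inner ℝ (x s) (F (x s)) + inner ℝ (F (x s)) (x s)) s :=
      HasDerivAt.inner ℝ (hx s) (hx s)
    have h2 : ∀ u : ℝ, (inner ℝ (x u) (x u) : ℝ) = ‖x u‖ ^ 2 := fun u =>
      real_inner_self_eq_norm_sq (x u)
    have h3 : (inner ℝ (x s) (F (x s)) : ℝ) + inner ℝ (F (x s)) (x s)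
        = 2 * inner ℝ (x s) (F (x s)) := by
      rw [real_inner_comm (F (x s)) (x s)]; ring
    rw [h3] at h1
    have := h1.congr_of_eventuallyEq (Filter.Eventually.of_forall fun u => (h2 u).symm)
    simpa [hV] using this
  have hbound : ∀ s : ℝ, V' s ≤ (-(2 * α)) * V s + 2 * β := by
    intro s
    have := hdiss (x s)
    simp only [hV', hV]
    nlinarith
  have hVρε : V 0 - ρ > ε := by
    have : V 0 > ρ + ε := h0
    linarith
  have hVρpos : 0 < V 0 - ρ := lt_trans hε hVρε
  have hTpos : 0 < (1 / (2 * α)) * Real.log ((V 0 - ρ) / ε) := by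
    apply mul_pos (by positivity)
    apply Real.log_pos
    rw [lt_div_iff₀ hε]
    linarith
  have ht0 : 0 ≤ t := le_of_lt (lt_of_lt_of_le hTpos ht)
  -- Grönwall
  have hgron : V t ≤ gronwallBound (V 0) (-(2 * α)) (2 * β) t := by
    have := le_gronwallBound_of_liminf_deriv_right_le
      (f := V) (f' := V') (δ := V 0) (K := -(2 * α)) (ε := 2 * β) (a := 0) (b := t)
      (fun s _ => (hVderiv s).continuousAt.continuousWithinAt)
      (fun s _ r hr => by
        have := ((hVderiv s).hasDerivWithinAt (s := Set.Ici s)).liminf_right_slope_le hr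
        refine this.mono fun z hz => ?_
        rwa [slope_def_field, div_eq_inv_mul] at hz)
      le_rfl
      (fun s _ => hbound s)
      t ⟨ht0, le_refl t⟩
    simpa using this
  have hK : (-(2 * α)) ≠ 0 := by
    have h2α : (0:ℝ) < 2 * α := by positivity
    exact ne_of_lt (by linarith)
  rw [gronwallBound_of_K_ne_0 hK] at hgron
  have hexp : Real.exp (-(2 * α) * t) ≤ ε / (V 0 - ρ) := by
    have h1 : -(2 * α) * t ≤ Real.log (ε / (V 0 - ρ)) := by
      rw [Real.log_div (ne_of_gt hε) (ne_of_gt hVρpos)]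
      have h2 : Real.log ((V 0 - ρ) / ε)
          = Real.log (V 0 - ρ) - Real.log ε := by
        rw [Real.log_div (ne_of_gt hVρpos) (ne_of_gt hε)]
      have h3 : (1 / (2 * α)) * (Real.log (V 0 - ρ) - Real.log ε) ≤ t := by
        rw [← h2]; exact ht
      have h2α : 0 < 2 * α := by positivity
      have h4 : Real.log (V 0 - ρ) - Real.log ε ≤ 2 * α * t := by
        have h5 := mul_le_mul_of_nonneg_left h3 (le_of_lt h2α)
        rwa [show (2 * α) * ((1 / (2 * α)) * (Real.log (V 0 - ρ) - Real.log ε))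
            = Real.log (V 0 - ρ) - Real.log ε from by field_simp] at h5
      linarith
    calc Real.exp (-(2 * α) * t) ≤ Real.exp (Real.log (ε / (V 0 - ρ))) :=
          Real.exp_le_exp.mpr h1
      _ = ε / (V 0 - ρ) := Real.exp_log (by positivity)
  -- simplify the bound
  have hρα : 2 * β / (-(2 * α)) = -ρ := by
    rw [hρ]; field_simp
  have hfinal : V 0 * Real.exp (-(2 * α) * t)
      + 2 * β / (-(2 * α)) * (Real.exp (-(2 * α) * t) - 1) ≤ ρ + ε := by
    rw [hρα]
    have hE : (V 0 - ρ) * Real.exp (-(2 * α) * t) ≤ ε := by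
      rw [div_eq_inv_mul] at hexp
      calc (V 0 - ρ) * Real.exp (-(2 * α) * t)
          ≤ (V 0 - ρ) * ((V 0 - ρ)⁻¹ * ε) :=
            mul_le_mul_of_nonneg_left hexp (le_of_lt hVρpos)
        _ = ε := by field_simp
    nlinarith [Real.exp_pos (-(2 * α) * t)]
  calc ‖x t‖ ^ 2 = V t := rfl
    _ ≤ _ := hgron
    _ ≤ ρ + ε := hfinal
    _ = β / α + ε := rfl
end
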